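/- G(m) ≤ 1 − (m−1)/(m(m+1)) for every integer m ≥ 2, where G(m) is the largest density bound guaranteeing schedulability for instances with minimum period at least m. -/

import Mathlib

/-- A schedule for a pinwheel instance (list of periods) is valid if every job `i`
appears in every window of `a_i` consecutive days. -/
def Valid (a : List ℕ) (f : ℕ → Fin a.length) : Prop :=
  ∀ (i : Fin a.length) (t : ℕ), ∃ s, t ≤ s ∧ s < t + a.get i ∧ f s = i

/-- A pinwheel instance is schedulable if a valid schedule exists. -/
def Schedulable (a : List ℕ) : Prop := ∃ f, Valid a f

/-- Density of a pinwheel instance: sum of reciprocals of the periods. -/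
noncomputable def density (a : List ℕ) : ℝ := (a.map fun x => (1:ℝ)/x).sum

/-- `G m` is the supremum of density bounds `d` such that every (nonempty) pinwheel
instance with all periods at least `m` and density at most `d` is schedulable. -/
noncomputable def G (m : ℕ) : ℝ :=
  sSup {d : ℝ | ∀ A : List ℕ, A ≠ [] → (∀ x ∈ A, m ≤ x) → density A ≤ d → Schedulable A}

lemma gaussIcc (m : ℕ) : (∑ k ∈ Finset.Icc 1 m, k) * 2 = m * (m + 1) := by
  have h : Finset.range (m+1) = insert 0 (Finset.Icc 1 m) := by
    ext k; simp [Nat.lt_succ_iff]; omega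
  have h2 := Finset.sum_range_id_mul_two (m+1)
  rw [h, Finset.sum_insert (by simp)] at h2
  have h3 : (∑ k ∈ Finset.Icc 1 m, k) * 2 = (m+1) * m := by simpa using h2
  exact h3.trans (Nat.mul_comm _ _)

lemma sum_aux (n : ℕ) (a b : ℝ) :
    ∑ k ∈ Finset.range (n+1), (if k = 0 then a else b) = a + n * b := by
  rw [Finset.sum_range_succ']
  simp [Finset.sum_const, nsmul_eq_mul, add_comm]

lemma unsched (m x : ℕ) (hm : 2 ≤ m) (hx : m ≤ x) :
    ¬ Schedulable (List.ofFn fun i : Fin (m+1) =>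
      if i.val = 0 then m else if i.val = m then x else m + 1) := by
  classical
  set p : Fin (m+1) → ℕ :=
    fun i => if i.val = 0 then m else if i.val = m then x else m + 1 with hp
  rintro ⟨f, hf⟩
  have hlen : (List.ofFn p).length = m + 1 := List.length_ofFn (f := p)
  set F : ℕ → Fin (m+1) := fun s => Fin.cast hlen (f s) with hF
  have hf' : ∀ (i : Fin (m+1)) (t : ℕ), ∃ s, t ≤ s ∧ s < t + p i ∧ F s = i := by
    intro i t
    obtain ⟨s, h1, h2, h3⟩ := hf (Fin.cast hlen.symm i) t
    refine ⟨s, h1, ?_, ?_⟩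
    · have hg : (List.ofFn p).get (Fin.cast hlen.symm i) = p i := by
        rw [List.get_ofFn]; apply congrArg p; apply Fin.ext; simp
      rwa [hg] at h2
    · apply Fin.ext
      have := congrArg Fin.val h3
      simpa [hF] using this
  set L : Fin (m+1) := ⟨m, lt_add_one m⟩ with hL
  have hmemS : ∀ i : Fin (m+1), i ∈ ({L}ᶜ : Finset (Fin (m+1))) ↔ i.val < m := by
    intro i
    simp only [Finset.mem_compl, Finset.mem_singleton]
    rw [Fin.ext_iff]
    have hv : L.val = m := rfl
    rw [hv]
    have := i.is_lt
    omega
  set S : Finset (Fin (m+1)) := ({L}ᶜ : Finset (Fin (m+1))) with hS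
  have hScard : S.card = m := by
    simp [hS, Finset.card_compl]
  have hpi : ∀ i : Fin (m+1), i.val < m → p i ≤ m + 1 := by
    intro i h; simp only [hp]; split_ifs <;> omega
  have hpige : ∀ i : Fin (m+1), i.val < m → m ≤ p i := by
    intro i h; simp only [hp]; split_ifs <;> omega
  have key : ∀ t, m ≤ t → F t ≠ L := by
    intro t ht hFt
    -- left occurrences
    have hclE : ∀ i : Fin (m+1), ∃ c, i.val < m →
        (1 ≤ c ∧ c ≤ m ∧ F (t - c) = i) := by
      intro i
      by_cases him : i.val < m
      · obtain ⟨s, h1, h2, h3⟩ := hf' i (t - m)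
        have hub : s < t + 1 := by
          have := hpi i him; omega
        have hne : s ≠ t := by
          intro h
          have h4 : i = L := by rw [← h3, h, hFt]
          have h5 : i.val = m := by rw [h4]
          omega
        refine ⟨t - s, fun _ => ⟨by omega, by omega, ?_⟩⟩
        have : t - (t - s) = s := by omega
        rw [this]; exact h3
      · exact ⟨1, fun h => absurd h him⟩
    have hcrE : ∀ i : Fin (m+1), ∃ c, i.val < m →
        (1 ≤ c ∧ c ≤ m ∧ F (t + c) = i) := by
      intro i
      by_cases him : i.val < m
      · obtain ⟨s, h1, h2, h3⟩ := hf' i t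
        have hub : s < t + (m + 1) := by
          have := hpi i him; omega
        have hne : s ≠ t := by
          intro h
          have h4 : i = L := by rw [← h3, h, hFt]
          have h5 : i.val = m := by rw [h4]
          omega
        refine ⟨s - t, fun _ => ⟨by omega, by omega, ?_⟩⟩
        have : t + (s - t) = s := by omega
        rw [this]; exact h3
      · exact ⟨1, fun h => absurd h him⟩
    choose cl hcl using hclE
    choose cr hcr using hcrE
    -- common facts for an injective "occurrence distance" function
    have main : ∀ c : Fin (m+1) → ℕ,
        (∀ i : Fin (m+1), i.val < m → 1 ≤ c i ∧ c i ≤ m) →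
        (∀ i j : Fin (m+1), i.val < m → j.val < m → c i = c j → i = j) →
        (∀ k, 1 ≤ k → k ≤ m → ∃ i : Fin (m+1), i.val < m ∧ c i = k) ∧
          (∑ i ∈ S, c i) * 2 = m * (m + 1) := by
      intro c hc hcinj
      have hinj' : ∀ i ∈ S, ∀ j ∈ S, c i = c j → i = j := fun i hi j hj =>
        hcinj i j ((hmemS i).1 hi) ((hmemS j).1 hj)
      have himg : S.image c = Finset.Icc 1 m := by
        apply Finset.eq_of_subset_of_card_le
        · intro k hk
          obtain ⟨i, hi, rfl⟩ := Finset.mem_image.1 hk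
          have h := hc i ((hmemS i).1 hi)
          exact Finset.mem_Icc.2 ⟨h.1, h.2⟩
        · rw [Finset.card_image_of_injOn
            (fun a ha b hb hab => hinj' a ha b hb hab), hScard, Nat.card_Icc]
          omega
      constructor
      · intro k hk1 hk2
        have hk : k ∈ S.image c := by rw [himg]; exact Finset.mem_Icc.2 ⟨hk1, hk2⟩
        obtain ⟨i, hi, hik⟩ := Finset.mem_image.1 hk
        exact ⟨i, (hmemS i).1 hi, hik⟩
      · have h1 : ∑ i ∈ S, c i = ∑ k ∈ Finset.Icc 1 m, k := by
          rw [← himg, Finset.sum_image hinj']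
        rw [h1, gaussIcc]
    have hclb : ∀ i : Fin (m+1), i.val < m → 1 ≤ cl i ∧ cl i ≤ m :=
      fun i h => ⟨(hcl i h).1, (hcl i h).2.1⟩
    have hcrb : ∀ i : Fin (m+1), i.val < m → 1 ≤ cr i ∧ cr i ≤ m :=
      fun i h => ⟨(hcr i h).1, (hcr i h).2.1⟩
    have hclinj : ∀ i j : Fin (m+1), i.val < m → j.val < m → cl i = cl j → i = j := by
      intro i j hi hj hij
      rw [← (hcl i hi).2.2, ← (hcl j hj).2.2, hij]
    have hcrinj : ∀ i j : Fin (m+1), i.val < m → j.val < m → cr i = cr j → i = j := by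
      intro i j hi hj hij
      rw [← (hcr i hi).2.2, ← (hcr j hj).2.2, hij]
    obtain ⟨hclsurj, hclsum⟩ := main cl hclb hclinj
    obtain ⟨hcrsurj, hcrsum⟩ := main cr hcrb hcrinj
    -- per job inequality
    have hkey : ∀ i ∈ S, cl i + cr i ≤ p i := by
      intro i hiS
      have him : i.val < m := (hmemS i).1 hiS
      have hcli := hcl i him
      have hcri := hcr i him
      have hclt : cl i ≤ t := le_trans hcli.2.1 ht
      obtain ⟨s, h1, h2, h3⟩ := hf' i (t - cl i + 1)
      have hpub : p i ≤ m + 1 := hpi i him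
      rcases lt_trichotomy s t with hst | hst | hst
      · exfalso
        have hk1 : 1 ≤ t - s := by omega
        have hk2 : t - s ≤ m := by omega
        obtain ⟨j, hjm, hjc⟩ := hclsurj (t - s) hk1 hk2
        have hj := (hcl j hjm).2.2
        rw [hjc] at hj
        have hts : t - (t - s) = s := by omega
        rw [hts] at hj
        have hij : j = i := by rw [← h3, hj]
        rw [hij] at hjc
        omega
      · exfalso
        have h4 : i = L := by rw [← h3, hst, hFt]
        have h5 : i.val = m := by rw [h4]
        omega
      · have hk1 : 1 ≤ s - t := by omega
        have hk2 : s - t ≤ m := by omega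
        obtain ⟨j, hjm, hjc⟩ := hcrsurj (s - t) hk1 hk2
        have hj := (hcr j hjm).2.2
        rw [hjc] at hj
        have hts : t + (s - t) = s := by omega
        rw [hts] at hj
        have hij : j = i := by rw [← h3, hj]
        rw [hij] at hjc
        omega
    have hle : ∑ i ∈ S, (cl i + cr i) ≤ ∑ i ∈ S, p i := Finset.sum_le_sum hkey
    have hlt : ∑ i ∈ S, p i < m * (m + 1) := by
      have hstep : ∑ i ∈ S, p i < ∑ i ∈ S, (m + 1) := by
        apply Finset.sum_lt_sum
        · intro i hi; exact hpi i ((hmemS i).1 hi)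
        · refine ⟨⟨0, by omega⟩, ?_, ?_⟩
          · rw [hmemS]; simpa using (by omega : 0 < m)
          · simp [hp]
      have hconst : ∑ _i ∈ S, (m + 1) = m * (m + 1) := by
        rw [Finset.sum_const, hScard, smul_eq_mul]
      omega
    rw [Finset.sum_add_distrib] at hle
    omega
  obtain ⟨s, hs1, _, hs3⟩ := hf' L m
  exact key s hs1 hs3

theorem stmt_19 (m : ℕ) (hm : 2 ≤ m) :
    G m ≤ 1 - ((m : ℝ) - 1) / (m * (m + 1)) := by
  classical
  have hmR : (2:ℝ) ≤ m := by exact_mod_cast hm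
  have hm0 : (0:ℝ) < m := by linarith
  have hm1 : (0:ℝ) < (m:ℝ) + 1 := by linarith
  set B : ℝ := 1 - ((m : ℝ) - 1) / (m * (m + 1)) with hB
  have hBnn : 0 ≤ B := by
    rw [hB, sub_nonneg, div_le_one (by positivity)]
    nlinarith
  apply Real.sSup_le _ hBnn
  intro d hd
  by_contra hdB
  push_neg at hdB
  have hε0 : 0 < d - B := by linarith
  set x : ℕ := max m (⌈(d - B)⁻¹⌉₊ + 1) with hxdef
  have hx : m ≤ x := le_max_left _ _
  have hx0 : (0:ℝ) < x := by
    have : 2 ≤ x := le_trans hm hx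
    exact_mod_cast (by omega : 0 < x)
  have hxε : 1 / (x:ℝ) ≤ d - B := by
    have h1 : (d - B)⁻¹ ≤ (x:ℝ) := by
      calc (d - B)⁻¹ ≤ (⌈(d - B)⁻¹⌉₊ : ℝ) := Nat.le_ceil _
        _ ≤ (x:ℝ) := by
          have : ⌈(d - B)⁻¹⌉₊ ≤ x := le_trans (Nat.le_succ _) (le_max_right _ _)
          exact_mod_cast this
    rw [one_div]
    calc (x:ℝ)⁻¹ ≤ ((d - B)⁻¹)⁻¹ := by
          apply inv_anti₀ (by positivity) h1
      _ = d - B := inv_inv _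
  set p : Fin (m+1) → ℕ :=
    fun i => if i.val = 0 then m else if i.val = m then x else m + 1 with hp
  set A : List ℕ := List.ofFn p with hA
  have hA1 : A ≠ [] := by
    intro h
    have := congrArg List.length h
    simp [hA] at this
  have hA2 : ∀ y ∈ A, m ≤ y := by
    intro y hy
    rw [hA, List.mem_ofFn] at hy
    obtain ⟨i, rfl⟩ := hy
    simp only [hp]; split_ifs <;> omega
  have hdA : density A ≤ d := by
    have hbind : ∀ l : List ℕ, (do let a ← l; pure ((a:ℕ):ℝ)) = l.map (fun a : ℕ => (a:ℝ)) := by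
      intro l; induction l with
      | nil => rfl
      | cons y ys ih => simp_all [List.flatMap_cons]
    have h1 : density A = ∑ i : Fin (m+1), (1:ℝ) / (p i : ℝ) := by
      rw [hA]
      unfold density
      rw [hbind, List.map_map, List.map_ofFn, List.sum_ofFn]
      rfl
    have h2 : ∀ i : Fin (m+1), (1:ℝ) / (p i : ℝ) =
        (fun k : ℕ => if k = 0 then (1:ℝ)/(m:ℝ) else
          if k = m then (1:ℝ)/(x:ℝ) else (1:ℝ)/((m:ℝ)+1)) i.val := by
      intro i
      simp only [hp]
      split_ifs <;> push_cast <;> ring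
    rw [h1]
    rw [Finset.sum_congr rfl (fun i _ => h2 i)]
    rw [Fin.sum_univ_eq_sum_range
      (fun k : ℕ => if k = 0 then (1:ℝ)/(m:ℝ) else
        if k = m then (1:ℝ)/(x:ℝ) else (1:ℝ)/((m:ℝ)+1)) (m+1)]
    rw [Finset.sum_range_succ]
    have h3 : ∀ k ∈ Finset.range m,
        (if k = 0 then (1:ℝ)/(m:ℝ) else if k = m then (1:ℝ)/(x:ℝ) else (1:ℝ)/((m:ℝ)+1))
        = (if k = 0 then (1:ℝ)/(m:ℝ) else (1:ℝ)/((m:ℝ)+1)) := by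
      intro k hk
      rw [Finset.mem_range] at hk
      by_cases h : k = 0 <;> simp [h, Nat.ne_of_lt hk]
    rw [Finset.sum_congr rfl h3]
    have h4 : ∑ k ∈ Finset.range m,
        (if k = 0 then (1:ℝ)/(m:ℝ) else (1:ℝ)/((m:ℝ)+1))
        = (1:ℝ)/(m:ℝ) + ((m:ℕ) - 1 : ℕ) * ((1:ℝ)/((m:ℝ)+1)) := by
      have := sum_aux (m - 1) ((1:ℝ)/(m:ℝ)) ((1:ℝ)/((m:ℝ)+1))
      rw [show (m - 1) + 1 = m from by omega] at this
      rw [this]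
    rw [h4]
    have hcst : (((m:ℕ) - 1 : ℕ) : ℝ) = (m:ℝ) - 1 := by
      have : (1:ℕ) ≤ m := by omega
      push_cast [this]; ring
    rw [hcst]
    have hmne : (m:ℕ) ≠ 0 := by omega
    have hif : (if (m:ℕ) = 0 then (1:ℝ)/(m:ℝ) else
        if (m:ℕ) = m then (1:ℝ)/(x:ℝ) else (1:ℝ)/((m:ℝ)+1)) = (1:ℝ)/(x:ℝ) := by
      simp [hmne]
    rw [hif]
    have hBeq : (1:ℝ)/(m:ℝ) + ((m:ℝ) - 1) * ((1:ℝ)/((m:ℝ)+1)) = B := by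
      rw [hB]; field_simp; ring
    linarith [hxε]
  have hsched := hd A hA1 hA2 hdA
  exact unsched m x hm hx hsched
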